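/- Let p be an odd prime, let R > 0, and let x₁, …, x_n, b₁, …, b_n ∈ ℂ_p satisfy |x_i − x_j|_p = R and |b_i − b_j|_p = R for all i ≠ j, and |x_i − b_j|_p = R for all i, j. Let α ∈ ℤ with α ≥ 0. For each pair i ≠ j, let ζ_{ij} be a root of unity in ℂ_p of order coprime to p with |(x_i − x_j)/(x_i − b_i) − ζ_{ij}|_p < 1 (such ζ_{ij} satisfies ζ_{ij} ≠ 1). Define the n×n matrix D_α by (D_α)_{ii} = 1 and (D_α)_{ij} = 1/(1 − ζ_{ij}^{p^α}) for i ≠ j. Then |det(D_α)|_p = 1. -/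

import Mathlib

/-!
Throughout, `K` plays the role of `ℂ_p`, the completion of an algebraic closure of `ℚ_p`:
it is a complete, algebraically closed, nonarchimedean (ultrametric) normed field equipped
with an isometric `ℚ_[p]`-algebra structure (hypothesis `hKext`).
-/

open scoped BigOperators

/-- A *path sequence*: a function defined (positive-valued and strictly increasing)
for `k ≥ k₀`, for some positive integer `k₀`. -/
structure PathSeq where
  toFun : ℕ → ℕ
  k₀ : ℕ
  k₀_pos : 0 < k₀
  pos : ∀ k, k₀ ≤ k → 0 < toFun k
  mono : ∀ k l, k₀ ≤ k → k < l → toFun k < toFun l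

/-- The Riemann-type sum `A_{f,φ}(k)` (with `N = φ(k)`):
`p^{-N} ∑_ζ (b - a) ζ · f (a + (b - a) ζ)`, `ζ` ranging over the `p^N`-th roots of unity. -/
noncomputable def Asum (p : ℕ) (K : Type*) [NormedField K] (a b : K) (f : K → K) (N : ℕ) : K :=
  ((p : K) ^ N)⁻¹ *
    ∑ ζ ∈ Polynomial.nthRootsFinset (p ^ N) (1 : K), (b - a) * ζ * f (a + (b - a) * ζ)

/-- `ψ` is, for `k ≥ k₀`, a subsequence of the path sequence `φ`. -/
def SubseqFrom (ψ φ : PathSeq) (k₀ : ℕ) : Prop :=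
  ∃ σ : ℕ → ℕ, (∀ k l, k₀ ≤ k → k < l → σ k < σ l) ∧
    ∀ k, k₀ ≤ k → φ.k₀ ≤ σ k ∧ ψ.toFun k = φ.toFun (σ k)

/-- An *interlocked* family of path sequences: nonempty, and any two members have a common
member-subsequence. -/
def Interlocked (Φ : Set PathSeq) : Prop :=
  Φ.Nonempty ∧ ∀ φ₁ ∈ Φ, ∀ φ₂ ∈ Φ, ∃ φ₃ ∈ Φ, ∃ k₀ : ℕ, 0 < k₀ ∧
    SubseqFrom φ₃ φ₁ k₀ ∧ SubseqFrom φ₃ φ₂ k₀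

/-- `∫_{𝒜(a,b),Φ} f(x) dx = L`: for every `ε > 0` there are `φ ∈ Φ` and `M` such that
`|A_{f,φ}(k) - L| < ε` for all `k > M` (in the domain of `φ`). -/
def HasIntegral (p : ℕ) (K : Type*) [NormedField K] (a b : K) (f : K → K)
    (Φ : Set PathSeq) (L : K) : Prop :=
  ∀ ε : ℝ, 0 < ε → ∃ φ ∈ Φ, ∃ M : ℕ, φ.k₀ ≤ M ∧
    ∀ k, M < k → ‖Asum p K a b f (φ.toFun k) - L‖ < ε

/-- `f` is holomorphic on `S`: its values on `S` are given by the single power series with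
coefficients `c`, centered at `b`, convergent on `S`. -/
def HolomorphicOn' (K : Type*) [NormedField K] (c : ℕ → K) (b : K) (f : K → K)
    (S : Set K) : Prop :=
  ∀ x ∈ S, Summable (fun n : ℕ => c n * (x - b) ^ n) ∧ f x = ∑' n : ℕ, c n * (x - b) ^ n

/-- The arc `𝒜(a,b)`: the open disc of radius `R = |a - b|` around `b`. -/
def arc (K : Type*) [NormedField K] (a b : K) : Set K := {x : K | ‖x - b‖ < ‖a - b‖}

/-- `c` are controlled coefficients of order `β` (for the radius `R`). -/
def Controlled (K : Type*) [NormedField K] (c : ℕ → K) (R β : ℝ) : Prop :=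
  ∃ M n₀ : ℝ, 0 < n₀ ∧ ∀ n : ℕ, n₀ < (n : ℝ) → ‖c n‖ * R ^ n < M * (n : ℝ) ^ β

/-- The interlocked family `Φ_α = {k ↦ α + λ k : λ ∈ ℤ⁺}`. -/
def PhiAlpha (α : ℕ) : Set PathSeq :=
  {φ : PathSeq | ∃ lam : ℕ, 0 < lam ∧ ∀ k : ℕ, φ.toFun k = α + lam * k}

open IsUltrametricDist

section ResidueField

variable (K : Type*) [NormedField K] [IsUltrametricDist K]

/-- The ring of integers of an ultrametric normed field. -/
def intRing : Subring K where
  carrier := {x | ‖x‖ ≤ 1}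
  mul_mem' := fun {a b} ha hb => by
    simpa [norm_mul] using mul_le_one₀ ha (norm_nonneg _) hb
  one_mem' := by simp
  add_mem' := fun {a b} ha hb => le_trans (norm_add_le_max a b) (max_le ha hb)
  zero_mem' := by simp
  neg_mem' := fun {a} ha => by simpa using ha

variable {K}

lemma mem_intRing_iff {x : K} : x ∈ intRing K ↔ ‖x‖ ≤ 1 := Iff.rfl

variable (K)

/-- The maximal ideal of the ring of integers. -/
def maxIdeal : Ideal (intRing K) where
  carrier := {x | ‖(x : K)‖ < 1}
  add_mem' := fun {a b} ha hb => lt_of_le_of_lt (norm_add_le_max _ _) (max_lt ha hb)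
  zero_mem' := by simp
  smul_mem' := fun c x hx => by
    have h1 : ‖(c : K)‖ * ‖(x : K)‖ ≤ 1 * ‖(x : K)‖ :=
      mul_le_mul_of_nonneg_right c.2 (norm_nonneg _)
    have : ‖(c : K) * (x : K)‖ < 1 := by
      rw [norm_mul]
      exact lt_of_le_of_lt (by simpa using h1) hx
    simpa [Set.mem_setOf_eq] using this

variable {K}

lemma mem_maxIdeal_iff {x : intRing K} : x ∈ maxIdeal K ↔ ‖(x : K)‖ < 1 := Iff.rfl

instance maxIdeal_isMaximal : (maxIdeal K).IsMaximal := by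
  rw [Ideal.isMaximal_iff]
  constructor
  · intro h
    have : ‖((1 : intRing K) : K)‖ < 1 := h
    simp at this
  · intro J x _hle hx hxJ
    have hx1 : ‖(x : K)‖ = 1 := le_antisymm x.2 (not_lt.mp hx)
    have hx0 : (x : K) ≠ 0 := by
      intro h; rw [h] at hx1; simp at hx1
    have hy : ‖(x : K)⁻¹‖ ≤ 1 := by rw [norm_inv, hx1]; norm_num
    have h1 : (⟨(x : K)⁻¹, hy⟩ : intRing K) * x = 1 := by
      ext; simp [inv_mul_cancel₀ hx0]
    exact h1 ▸ J.mul_mem_left _ hxJ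

noncomputable instance : Field (intRing K ⧸ maxIdeal K) := Ideal.Quotient.field _

lemma charP_residue (p : ℕ) [hp : Fact p.Prime] (hpK : ‖(p : K)‖ < 1) :
    CharP (intRing K ⧸ maxIdeal K) p := by
  have h0 : ((p : ℕ) : intRing K ⧸ maxIdeal K) = 0 := by
    have hm : ((p : ℕ) : intRing K) ∈ maxIdeal K := by
      rw [mem_maxIdeal_iff]
      have : (((p : ℕ) : intRing K) : K) = (p : K) := by push_cast; ring
      rw [this]; exact hpK
    rw [← map_natCast (Ideal.Quotient.mk (maxIdeal K))]
    exact Ideal.Quotient.eq_zero_iff_mem.mpr hm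
  have hdvd : ringChar (intRing K ⧸ maxIdeal K) ∣ p := (ringChar.spec _ p).mp h0
  rcases hp.out.eq_one_or_self_of_dvd _ hdvd with h | h
  · haveI := ringChar.of_eq h
    exact absurd rfl (CharP.char_ne_one (intRing K ⧸ maxIdeal K) 1)
  · exact ringChar.of_eq h

lemma quot_ne_zero_iff {x : intRing K} :
    Ideal.Quotient.mk (maxIdeal K) x ≠ 0 ↔ ‖(x : K)‖ = 1 := by
  rw [Ne, Ideal.Quotient.eq_zero_iff_mem, mem_maxIdeal_iff, not_lt]
  constructor
  · intro h; exact le_antisymm x.2 h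
  · intro h; rw [h]

end ResidueField

set_option maxHeartbeats 1000000 in
set_option synthInstance.maxHeartbeats 400000 in
theorem key (p : ℕ) [Fact p.Prime] {K : Type*} [NormedField K] [IsUltrametricDist K]
    (hpK : ‖(p : K)‖ < 1) (n α : ℕ) (X B : Fin n → K)
    (hXX : ∀ i j, i ≠ j → ‖X i - X j‖ = 1) (hBB : ∀ i j, i ≠ j → ‖B i - B j‖ = 1)
    (hXB : ∀ i j, ‖X i - B j‖ = 1) (hXle : ∀ i, ‖X i‖ ≤ 1) (hBle : ∀ i, ‖B i‖ ≤ 1)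
    (ζ : Fin n → Fin n → K)
    (hζ : ∀ i j, i ≠ j → ‖(X i - X j) / (X i - B i) - ζ i j‖ < 1) :
    ‖(Matrix.of fun i j : Fin n =>
        if i = j then (1 : K) else (1 - ζ i j ^ p ^ α)⁻¹).det‖ = 1 := by
  classical
  haveI : CharP (intRing K ⧸ maxIdeal K) p := charP_residue p hpK
  set π := Ideal.Quotient.mk (maxIdeal K) with hπdef
  -- basic nonvanishing
  have hXBne : ∀ i j, X i - B j ≠ 0 := by
    intro i j h
    have := hXB i j; rw [h] at this; simp at this
  -- norms of ζ
  have hζle : ∀ i j, i ≠ j → ‖ζ i j‖ ≤ 1 := by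
    intro i j hij
    have hu : ‖(X i - X j) / (X i - B i)‖ = 1 := by
      rw [norm_div, hXX i j hij, hXB i i, div_one]
    have hrw : ζ i j = (X i - X j) / (X i - B i) - ((X i - X j) / (X i - B i) - ζ i j) := by ring
    rw [hrw, sub_eq_add_neg]
    refine le_trans (norm_add_le_max _ _) ?_
    rw [norm_neg]
    exact max_le (le_of_eq hu) (le_of_lt (hζ i j hij))
  -- integral elements
  set XO : Fin n → intRing K := fun i => ⟨X i, hXle i⟩ with hXOdef
  set BO : Fin n → intRing K := fun i => ⟨B i, hBle i⟩ with hBOdef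
  have hEle : ∀ i j : Fin n, ‖(X i - B i) / (X j - B i)‖ ≤ 1 := by
    intro i j; rw [norm_div, hXB i i, hXB j i]; norm_num
  set EO : Matrix (Fin n) (Fin n) (intRing K) :=
    Matrix.of (fun i j => (⟨(X i - B i) / (X j - B i), hEle i j⟩ : intRing K)) with hEOdef
  set Xk : Fin n → (intRing K ⧸ maxIdeal K) := fun i => π (XO i) with hXkdef
  set Bk : Fin n → (intRing K ⧸ maxIdeal K) := fun i => π (BO i) with hBkdef
  have hXBk : ∀ i j, Xk i - Bk j ≠ 0 := by
    intro i j
    have h1 : π (XO i - BO j) ≠ 0 := by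
      rw [hπdef, quot_ne_zero_iff]
      show ‖((XO i - BO j : intRing K) : K)‖ = 1
      push_cast
      exact hXB i j
    simpa [map_sub] using h1
  have hXXk : ∀ i j, i ≠ j → Xk i ≠ Xk j := by
    intro i j hij h
    have h1 : π (XO i - XO j) ≠ 0 := by
      rw [hπdef, quot_ne_zero_iff]
      show ‖((XO i - XO j : intRing K) : K)‖ = 1
      push_cast
      exact hXX i j hij
    apply h1
    rw [map_sub]
    show Xk i - Xk j = 0
    rw [h, sub_self]
  have hBBk : ∀ i j, i ≠ j → Bk i ≠ Bk j := by
    intro i j hij h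
    have h1 : π (BO i - BO j) ≠ 0 := by
      rw [hπdef, quot_ne_zero_iff]
      show ‖((BO i - BO j : intRing K) : K)‖ = 1
      push_cast
      exact hBB i j hij
    apply h1
    rw [map_sub]
    show Bk i - Bk j = 0
    rw [h, sub_self]
  have hekk : ∀ i j, π (EO i j) * (Xk j - Bk i) = Xk i - Bk i := by
    intro i j
    have hO : EO i j * (XO j - BO i) = XO i - BO i := by
      ext
      push_cast
      show (X i - B i) / (X j - B i) * (X j - B i) = X i - B i
      exact div_mul_cancel₀ _ (hXBne j i)
    have := congrArg π hO
    rw [map_mul, map_sub, map_sub] at this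
    exact this
  -- elements u, v, ζ in the integer ring
  have hule : ∀ i j : Fin n, ‖(X i - X j) / (X i - B i)‖ ≤ 1 := by
    intro i j
    rw [norm_div, hXB i i, div_one, sub_eq_add_neg]
    refine le_trans (norm_add_le_max _ _) ?_
    rw [norm_neg]
    exact max_le (hXle i) (hXle j)
  have hvle : ∀ i j : Fin n, ‖(X j - B i) / (X i - B i)‖ ≤ 1 := by
    intro i j; rw [norm_div, hXB j i, hXB i i]; norm_num
  set uO : Fin n → Fin n → intRing K :=
    fun i j => ⟨(X i - X j) / (X i - B i), hule i j⟩ with huOdef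
  set vO : Fin n → Fin n → intRing K :=
    fun i j => ⟨(X j - B i) / (X i - B i), hvle i j⟩ with hvOdef
  set ζO : Fin n → Fin n → intRing K :=
    fun i j => if h : i ≠ j then ⟨ζ i j, hζle i j h⟩ else 1 with hζOdef
  have hζOcoe : ∀ i j, i ≠ j → (ζO i j : K) = ζ i j := by
    intro i j h; rw [hζOdef]; simp [h]
  have huv : ∀ i j : Fin n, (1 : intRing K) - uO i j = vO i j := by
    intro i j
    ext
    push_cast
    show 1 - (X i - X j) / (X i - B i) = (X j - B i) / (X i - B i)
    rw [eq_div_iff (hXBne i i), sub_mul, one_mul, div_mul_cancel₀ _ (hXBne i i)]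
    ring
  have hζu : ∀ i j, i ≠ j → π (ζO i j) = π (uO i j) := by
    intro i j h
    rw [hπdef, Ideal.Quotient.mk_eq_mk_iff_sub_mem, mem_maxIdeal_iff]
    have : ((ζO i j - uO i j : intRing K) : K) = ζ i j - (X i - X j) / (X i - B i) := by
      push_cast [hζOcoe i j h]
      rfl
    rw [this, norm_sub_rev]
    exact hζ i j h
  have hvk0 : ∀ i j, π (vO i j) ≠ 0 := by
    intro i j
    rw [hπdef, quot_ne_zero_iff]
    show ‖(X j - B i) / (X i - B i)‖ = 1
    rw [norm_div, hXB j i, hXB i i, div_one]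
  have hπw : ∀ i j, i ≠ j →
      π (1 - ζO i j ^ p ^ α) = (π (vO i j)) ^ p ^ α := by
    intro i j h
    rw [map_sub, map_pow, map_one, hζu i j h, ← huv i j, map_sub, map_one]
    rw [← one_pow (p ^ α), ← sub_pow_char_pow]
    rw [one_pow]
  have hwnorm : ∀ i j, i ≠ j → ‖1 - ζ i j ^ p ^ α‖ = 1 := by
    intro i j h
    have h1 : π (1 - ζO i j ^ p ^ α) ≠ 0 := by
      rw [hπw i j h]
      exact pow_ne_zero _ (hvk0 i j)
    rw [hπdef, quot_ne_zero_iff] at h1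
    have h2 : ((1 - ζO i j ^ p ^ α : intRing K) : K) = 1 - ζ i j ^ p ^ α := by
      push_cast [hζOcoe i j h]
      rfl
    rwa [h2] at h1
  have hwne : ∀ i j, i ≠ j → 1 - ζ i j ^ p ^ α ≠ 0 := by
    intro i j h hzero
    have := hwnorm i j h; rw [hzero] at this; simp at this
  have hDle : ∀ i j, i ≠ j → ‖(1 - ζ i j ^ p ^ α)⁻¹‖ ≤ 1 := by
    intro i j h
    rw [norm_inv, hwnorm i j h]
    norm_num
  set DO : Matrix (Fin n) (Fin n) (intRing K) :=
    Matrix.of (fun i j => if h : i = j then 1 else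
      (⟨(1 - ζ i j ^ p ^ α)⁻¹, hDle i j h⟩ : intRing K)) with hDOdef
  have hDE : ∀ i j, π (DO i j) = π (EO i j) ^ p ^ α := by
    intro i j
    by_cases h : i = j
    · subst h
      have hE1 : EO i i = 1 := by
        ext
        show (X i - B i) / (X i - B i) = 1
        exact div_self (hXBne i i)
      rw [hE1]
      show π (DO i i) = π 1 ^ p ^ α
      rw [hDOdef]
      simp
    · have hDcoe : ((DO i j : intRing K) : K) = (1 - ζ i j ^ p ^ α)⁻¹ := by
        rw [hDOdef]; simp [h]
      have hinv : DO i j * (1 - ζO i j ^ p ^ α) = 1 := by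
        ext
        push_cast
        rw [hDcoe, hζOcoe i j h]
        exact inv_mul_cancel₀ (hwne i j h)
      have hinv2 := congrArg π hinv
      rw [map_mul, map_one, hπw i j h] at hinv2
      have hev : EO i j * vO i j = 1 := by
        ext
        push_cast
        show (X i - B i) / (X j - B i) * ((X j - B i) / (X i - B i)) = 1
        rw [div_mul_div_comm, mul_comm (X j - B i) (X i - B i),
          div_self (mul_ne_zero (hXBne i i) (hXBne j i))]
      have hev2 := congrArg π hev
      rw [map_mul, map_one] at hev2
      have hev3 : π (EO i j) ^ p ^ α * π (vO i j) ^ p ^ α = 1 := by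
        rw [← mul_pow, hev2, one_pow]
      rw [eq_inv_of_mul_eq_one_left hinv2, eq_inv_of_mul_eq_one_left hev3]
  -- determinant congruence via Frobenius
  haveI : ExpChar (intRing K ⧸ maxIdeal K) p := ExpChar.prime Fact.out
  have hdet1 : π DO.det = π (EO.det ^ p ^ α) := by
    have h1 : DO.map π = (EO.map π).map (iterateFrobenius (intRing K ⧸ maxIdeal K) p α) := by
      ext i j
      simp only [Matrix.map_apply]
      rw [iterateFrobenius_def]
      exact hDE i j
    rw [map_pow]
    calc π DO.det = (DO.map π).det := RingHom.map_det π DO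
      _ = ((EO.map π).map (iterateFrobenius (intRing K ⧸ maxIdeal K) p α)).det := by rw [h1]
      _ = iterateFrobenius (intRing K ⧸ maxIdeal K) p α (EO.map π).det :=
          ((iterateFrobenius (intRing K ⧸ maxIdeal K) p α).map_det _).symm
      _ = ((EO.map π).det) ^ p ^ α := by rw [iterateFrobenius_def]
      _ = (π EO.det) ^ p ^ α := by rw [RingHom.map_det, RingHom.mapMatrix_apply]
  -- the Cauchy-type determinant is a unit
  have hEdet : π EO.det ≠ 0 := by
    intro h0
    have h0' : (EO.map π).det = 0 := by
      rw [← RingHom.mapMatrix_apply, ← RingHom.map_det]; exact h0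
    obtain ⟨v, hv, hmv⟩ := Matrix.exists_mulVec_eq_zero_iff.mpr h0'
    obtain ⟨j₀, hj₀⟩ := Function.ne_iff.mp hv
    set Q : Polynomial (intRing K ⧸ maxIdeal K) :=
      ∑ j : Fin n, Polynomial.C (v j) *
        ∏ l ∈ Finset.univ.erase j, (Polynomial.C (Xk l) - Polynomial.X) with hQdef
    have hQeval : ∀ t : intRing K ⧸ maxIdeal K,
        Q.eval t = ∑ j : Fin n, v j * ∏ l ∈ Finset.univ.erase j, (Xk l - t) := by
      intro t
      rw [hQdef, Polynomial.eval_finset_sum]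
      refine Finset.sum_congr rfl fun j _ => ?_
      rw [Polynomial.eval_mul, Polynomial.eval_C, Polynomial.eval_prod]
      simp [Polynomial.eval_sub]
    have heval : ∀ i, Q.eval (Bk i) = 0 := by
      intro i
      have h2 : ∑ j, π (EO i j) * v j = 0 := by
        have h3 := congrFun hmv i
        simpa [Matrix.mulVec, dotProduct, Matrix.map_apply] using h3
      have h4 : Q.eval (Bk i) * (Xk i - Bk i) =
          (∑ j, π (EO i j) * v j) * ∏ l, (Xk l - Bk i) := by
        rw [hQeval, Finset.sum_mul, Finset.sum_mul]
        refine Finset.sum_congr rfl fun j _ => ?_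
        rw [← Finset.mul_prod_erase Finset.univ (fun l => Xk l - Bk i) (Finset.mem_univ j)]
        have hjj := hekk i j
        linear_combination (-(v j * ∏ l ∈ Finset.univ.erase j, (Xk l - Bk i))) * hjj
      rw [h2, zero_mul] at h4
      rcases mul_eq_zero.mp h4 with h5 | h5
      · exact h5
      · exact absurd h5 (hXBk i i)
    have hdeg : Q.natDegree < n := by
      have hle : Q.natDegree ≤ n - 1 := by
        rw [hQdef]
        refine Polynomial.natDegree_sum_le_of_forall_le _ _ fun j _ => ?_
        refine le_trans (Polynomial.natDegree_mul_le) ?_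
        rw [Polynomial.natDegree_C, zero_add]
        refine le_trans (Polynomial.natDegree_prod_le _ _) ?_
        refine le_trans (Finset.sum_le_card_nsmul _ _ 1 fun l _ => ?_) ?_
        · exact le_trans (Polynomial.natDegree_sub_le _ _) (by simp)
        · rw [Finset.card_erase_of_mem (Finset.mem_univ j), Finset.card_univ, Fintype.card_fin]
          simp
      have hn0 : 0 < n := j₀.pos
      omega
    have hBkInj : Function.Injective Bk := by
      intro i j h
      by_contra hij
      exact hBBk i j hij h
    have hQ0 : Q = 0 :=
      Polynomial.eq_zero_of_natDegree_lt_card_of_eval_eq_zero Q hBkInj heval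
        (by rwa [Fintype.card_fin])
    have h6 : Q.eval (Xk j₀) = 0 := by rw [hQ0]; simp
    rw [hQeval] at h6
    have h7 : ∀ j ∈ Finset.univ, j ≠ j₀ →
        v j * ∏ l ∈ Finset.univ.erase j, (Xk l - Xk j₀) = 0 := by
      intro j _ hj
      rw [Finset.prod_eq_zero (Finset.mem_erase.mpr ⟨Ne.symm hj, Finset.mem_univ j₀⟩)
        (sub_self (Xk j₀)), mul_zero]
    rw [Finset.sum_eq_single j₀ (fun j h1 h2 => h7 j h1 h2)
      (fun h => absurd (Finset.mem_univ j₀) h)] at h6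
    rcases mul_eq_zero.mp h6 with h8 | h8
    · exact hj₀ h8
    · obtain ⟨l, hl, hl0⟩ := Finset.prod_eq_zero_iff.mp h8
      exact hXXk l j₀ (Finset.mem_erase.mp hl).1 (sub_eq_zero.mp hl0)
  have hEnorm : ‖((EO.det : intRing K) : K)‖ = 1 := by
    rw [hπdef] at hEdet
    exact quot_ne_zero_iff.mp hEdet
  have hsub : ‖((DO.det - EO.det ^ p ^ α : intRing K) : K)‖ < 1 := by
    rw [hπdef] at hdet1
    exact mem_maxIdeal_iff.mp (Ideal.Quotient.eq.mp hdet1)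
  have hpow : ‖((EO.det ^ p ^ α : intRing K) : K)‖ = 1 := by
    push_cast
    rw [norm_pow, hEnorm, one_pow]
  have hDdet : ‖((DO.det : intRing K) : K)‖ = 1 := by
    have hsplit : ((DO.det : intRing K) : K) =
        ((EO.det ^ p ^ α : intRing K) : K) + ((DO.det - EO.det ^ p ^ α : intRing K) : K) := by
      push_cast
      ring
    have hne : ‖((EO.det ^ p ^ α : intRing K) : K)‖ ≠
        ‖((DO.det - EO.det ^ p ^ α : intRing K) : K)‖ := by
      rw [hpow]
      exact (ne_of_lt hsub).symm
    rw [hsplit, norm_add_eq_max_of_norm_ne_norm hne, hpow]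
    exact max_eq_left (le_of_lt hsub)
  have hfinal : (Matrix.of fun i j : Fin n =>
      if i = j then (1 : K) else (1 - ζ i j ^ p ^ α)⁻¹) =
      DO.map ((intRing K).subtype) := by
    ext i j
    by_cases h : i = j
    · subst h; rw [hDOdef]; simp [Matrix.map_apply]
    · rw [hDOdef]; simp [Matrix.map_apply, h]
  rw [hfinal, ← RingHom.mapMatrix_apply, ← RingHom.map_det]
  exact hDdet

set_option maxHeartbeats 1000000 in
set_option synthInstance.maxHeartbeats 400000 in
/-- Under the stated norm conditions on `x₁,…,x_n, b₁,…,b_n`, with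
`ζ_{ij}` the root of unity of order coprime to `p` near `(x_i - x_j)/(x_i - b_i)`, the
matrix `D_α` with diagonal entries `1` and off-diagonal entries `1/(1 - ζ_{ij}^{p^α})`
has `|det D_α|_p = 1`. -/
theorem stmt_19 (p : ℕ) [Fact (Nat.Prime p)] (hp2 : p ≠ 2)
    (K : Type*) [NormedField K] [CompleteSpace K] [IsAlgClosed K] [IsUltrametricDist K]
    [Algebra ℚ_[p] K] (hKext : ∀ q : ℚ_[p], ‖algebraMap ℚ_[p] K q‖ = ‖q‖)
    (R : ℝ) (hR : 0 < R) (n : ℕ) (x b : Fin n → K)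
    (hxx : ∀ i j, i ≠ j → ‖x i - x j‖ = R) (hbb : ∀ i j, i ≠ j → ‖b i - b j‖ = R)
    (hxb : ∀ i j, ‖x i - b j‖ = R) (α : ℕ) (ζ : Fin n → Fin n → K)
    (hζ : ∀ i j, i ≠ j → IsOfFinOrder (ζ i j) ∧ (orderOf (ζ i j)).Coprime p ∧
      ‖(x i - x j) / (x i - b i) - ζ i j‖ < 1) :
    ‖(Matrix.of fun i j : Fin n =>
        if i = j then (1 : K) else (1 - ζ i j ^ p ^ α)⁻¹).det‖ = 1 := by
  rcases Nat.eq_zero_or_pos n with rfl | hn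
  · simp [Matrix.det_fin_zero]
  · have hprime : Nat.Prime p := Fact.out
    have hpK : ‖(p : K)‖ < 1 := by
      have h1 : ((p : ℕ) : K) = algebraMap ℚ_[p] K ((p : ℕ) : ℚ_[p]) :=
        (map_natCast (algebraMap ℚ_[p] K) p).symm
      rw [h1, hKext, Padic.norm_p]
      have hp1 : (1 : ℝ) < (p : ℝ) := by exact_mod_cast hprime.one_lt
      rw [inv_lt_one_iff₀]
      right
      exact hp1
    have hR0 : R ≠ 0 := ne_of_gt hR
    set i₀ : Fin n := ⟨0, hn⟩ with hi₀
    set t : K := x i₀ - b i₀ with htdef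
    have htn : ‖t‖ = R := hxb i₀ i₀
    have ht0 : t ≠ 0 := by
      intro h; rw [h] at htn; simp at htn; exact hR0 htn.symm
    have hxbne : ∀ i j, x i - b j ≠ 0 := by
      intro i j h
      have := hxb i j; rw [h] at this; simp at this; exact hR0 this.symm
    set X : Fin n → K := fun i => (x i - x i₀) / t with hXdef
    set B : Fin n → K := fun i => (b i - x i₀) / t with hBdef
    have hXsub : ∀ i j, X i - X j = (x i - x j) / t := by
      intro i j
      rw [hXdef]
      simp only
      rw [div_sub_div_same]
      congr 1
      ring
    have hXBsub : ∀ i j, X i - B j = (x i - b j) / t := by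
      intro i j
      rw [hXdef, hBdef]
      simp only
      rw [div_sub_div_same]
      congr 1
      ring
    have hBBsub : ∀ i j, B i - B j = (b i - b j) / t := by
      intro i j
      rw [hBdef]
      simp only
      rw [div_sub_div_same]
      congr 1
      ring
    have hXX' : ∀ i j, i ≠ j → ‖X i - X j‖ = 1 := by
      intro i j h
      rw [hXsub, norm_div, hxx i j h, htn, div_self hR0]
    have hBB' : ∀ i j, i ≠ j → ‖B i - B j‖ = 1 := by
      intro i j h
      rw [hBBsub, norm_div, hbb i j h, htn, div_self hR0]
    have hXB' : ∀ i j, ‖X i - B j‖ = 1 := by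
      intro i j
      rw [hXBsub, norm_div, hxb i j, htn, div_self hR0]
    have hXle : ∀ i, ‖X i‖ ≤ 1 := by
      intro i
      rw [hXdef]
      simp only
      rw [norm_div, htn]
      by_cases h : i = i₀
      · subst h; simp
      · rw [hxx i i₀ h, div_self hR0]
    have hBle : ∀ i, ‖B i‖ ≤ 1 := by
      intro i
      rw [hBdef]
      simp only
      rw [norm_div, htn, norm_sub_rev, hxb i₀ i, div_self hR0]
    have hratio : ∀ i j, (X i - X j) / (X i - B i) = (x i - x j) / (x i - b i) := by
      intro i j
      rw [hXsub, hXBsub]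
      rw [div_div_div_cancel_right₀]
      exact ht0
    have hζ' : ∀ i j, i ≠ j → ‖(X i - X j) / (X i - B i) - ζ i j‖ < 1 := by
      intro i j h
      rw [hratio]
      exact (hζ i j h).2.2
    exact key p hpK n α X B hXX' hBB' hXB' hXle hBle ζ hζ'
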